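/- Let C, C' ⊆ ℝⁿ be the interiors of rational polyhedral cones such that W := closure(C) ∩ closure(C') is a common codimension-one face. Let γ be an automorphism of ℝⁿ preserving the lattice ℤⁿ, with γ(C) = C', fixing W pointwise. Then γ² = 1 and the fixed-point set of γ is exactly the hyperplane spanned by W. -/

import Mathlib

/-!
STATEMENT 1. If `C, C' ⊆ ℝⁿ` are the interiors of rational polyhedral cones whose
closures share the codimension-one face `W = closure C ∩ closure C'`, and `γ` is an
integral linear automorphism of `ℝⁿ` with `γ(C) = C'` fixing `W` pointwise, then
`γ² = 1` and the fixed locus of `γ` is exactly the hyperplane spanned by `W`.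
-/

open Set Pointwise

/-- A rational polyhedral cone: the cone generated by finitely many rational vectors. -/
def IsRatPolyCone {n : ℕ} (σ : Set (Fin n → ℝ)) : Prop :=
  ∃ (m : ℕ) (v : Fin m → (Fin n → ℚ)),
    σ = {x | ∃ c : Fin m → ℝ, (∀ i, 0 ≤ c i) ∧
      x = ∑ i, c i • (fun j => ((v i j : ℝ)))}

/-- A face of a convex cone. -/
def IsFaceOf {n : ℕ} (F C : Set (Fin n → ℝ)) : Prop :=
  F ⊆ C ∧ Convex ℝ F ∧ (∀ c : ℝ, 0 ≤ c → ∀ x ∈ F, c • x ∈ F) ∧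
    ∀ x ∈ C, ∀ y ∈ C, x + y ∈ F → x ∈ F ∧ y ∈ F

/-- An integral automorphism of `ℝⁿ`: a linear automorphism restricting to an
automorphism of the lattice `ℤⁿ`. -/
def IsIntegralAut {n : ℕ} (γ : (Fin n → ℝ) ≃ₗ[ℝ] (Fin n → ℝ)) : Prop :=
  (∀ x : Fin n → ℤ, ∃ y : Fin n → ℤ, γ (fun i => ((x i : ℝ))) = fun i => ((y i : ℝ))) ∧
  (∀ x : Fin n → ℤ, ∃ y : Fin n → ℤ, γ.symm (fun i => ((x i : ℝ))) = fun i => ((y i : ℝ)))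

/-- A rational polyhedral cone is closed under nonnegative scaling. -/
lemma ratPoly_smul {n : ℕ} {σ : Set (Fin n → ℝ)} (h : IsRatPolyCone σ) :
    ∀ t : ℝ, 0 ≤ t → ∀ x ∈ σ, t • x ∈ σ := by
  obtain ⟨m, v, rfl⟩ := h
  rintro t ht x ⟨c, hc, rfl⟩
  refine ⟨fun i => t * c i, fun i => mul_nonneg ht (hc i), ?_⟩
  simp only [Finset.smul_sum, smul_smul]

/-- A rational polyhedral cone is closed under addition. -/
lemma ratPoly_add {n : ℕ} {σ : Set (Fin n → ℝ)} (h : IsRatPolyCone σ) :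
    ∀ x ∈ σ, ∀ y ∈ σ, x + y ∈ σ := by
  obtain ⟨m, v, rfl⟩ := h
  rintro x ⟨c, hc, rfl⟩ y ⟨c', hc', rfl⟩
  refine ⟨fun i => c i + c' i, fun i => add_nonneg (hc i) (hc' i), ?_⟩
  simp only [← Finset.sum_add_distrib, add_smul]

/-- A rational polyhedral cone is convex. -/
lemma ratPoly_convex {n : ℕ} {σ : Set (Fin n → ℝ)} (h : IsRatPolyCone σ) : Convex ℝ σ := by
  intro x hx y hy a b ha hb _
  exact ratPoly_add h _ (ratPoly_smul h a ha x hx) _ (ratPoly_smul h b hb y hy)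

set_option maxHeartbeats 3200000 in
theorem stmt1 {n : ℕ} (σ σ' : Set (Fin n → ℝ))
    (hσ : IsRatPolyCone σ) (hσ' : IsRatPolyCone σ')
    (C C' : Set (Fin n → ℝ)) (hC : C = interior σ) (hC' : C' = interior σ')
    (hCne : C.Nonempty) (hC'ne : C'.Nonempty)
    (W : Set (Fin n → ℝ)) (hW : W = closure C ∩ closure C')
    (hWfaceC : IsFaceOf W (closure C)) (hWfaceC' : IsFaceOf W (closure C'))
    (hWcodim : Module.finrank ℝ (Submodule.span ℝ W) + 1 = n)
    (γ : (Fin n → ℝ) ≃ₗ[ℝ] (Fin n → ℝ)) (hγint : IsIntegralAut γ)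
    (hγC : γ '' C = C') (hγW : ∀ w ∈ W, γ w = w) :
    (∀ x, γ (γ x) = x) ∧
    {x | γ x = x} = (Submodule.span ℝ W : Set (Fin n → ℝ)) := by
  classical
  subst hC hC'
  have hVrank : Module.finrank ℝ (Fin n → ℝ) = n := by
    simp [Module.finrank_pi]
  obtain ⟨x₀, hx₀⟩ := hCne
  -- scaling properties
  have hσscale : ∀ t : ℝ, 0 < t → t • σ = σ := by
    intro t ht
    apply Subset.antisymm
    · rintro _ ⟨x, hx, rfl⟩; exact ratPoly_smul hσ t ht.le x hx
    · intro x hx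
      exact ⟨t⁻¹ • x, ratPoly_smul hσ _ (inv_nonneg.2 ht.le) x hx, by
        simp [smul_smul, mul_inv_cancel₀ ht.ne']⟩
  have hσ'scale : ∀ t : ℝ, 0 < t → t • σ' = σ' := by
    intro t ht
    apply Subset.antisymm
    · rintro _ ⟨x, hx, rfl⟩; exact ratPoly_smul hσ' t ht.le x hx
    · intro x hx
      exact ⟨t⁻¹ • x, ratPoly_smul hσ' _ (inv_nonneg.2 ht.le) x hx, by
        simp [smul_smul, mul_inv_cancel₀ ht.ne']⟩
  have hCscale : ∀ t : ℝ, 0 < t → ∀ x ∈ interior σ, t • x ∈ interior σ := by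
    intro t ht x hx
    have h1 : t • x ∈ t • interior σ := smul_mem_smul_set hx
    rwa [← interior_smul₀ ht.ne', hσscale t ht] at h1
  have hC'scale : ∀ t : ℝ, 0 < t → ∀ x ∈ interior σ', t • x ∈ interior σ' := by
    intro t ht x hx
    have h1 : t • x ∈ t • interior σ' := smul_mem_smul_set hx
    rwa [← interior_smul₀ ht.ne', hσ'scale t ht] at h1
  -- closure + interior ⊆ interior
  have hKC : ∀ a ∈ closure σ, ∀ b ∈ interior σ, a + b ∈ interior σ := by
    intro a ha b hb
    have hz : (2:ℝ)⁻¹ • b + (2:ℝ)⁻¹ • a ∈ interior σ :=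
      (ratPoly_convex hσ).combo_interior_closure_mem_interior hb ha (by norm_num)
        (by norm_num) (by norm_num)
    have h2 := hCscale 2 (by norm_num) _ hz
    rwa [smul_add, smul_smul, smul_smul, (by norm_num : (2:ℝ) * 2⁻¹ = 1), one_smul, one_smul,
      add_comm] at h2
  have hKC' : ∀ a ∈ closure σ', ∀ b ∈ interior σ', a + b ∈ interior σ' := by
    intro a ha b hb
    have hz : (2:ℝ)⁻¹ • b + (2:ℝ)⁻¹ • a ∈ interior σ' :=
      (ratPoly_convex hσ').combo_interior_closure_mem_interior hb ha (by norm_num)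
        (by norm_num) (by norm_num)
    have h2 := hC'scale 2 (by norm_num) _ hz
    rwa [smul_add, smul_smul, smul_smul, (by norm_num : (2:ℝ) * 2⁻¹ = 1), one_smul, one_smul,
      add_comm] at h2
  -- basic facts about W
  have hy₀C' : γ x₀ ∈ interior σ' := by
    rw [← hγC]; exact mem_image_of_mem _ hx₀
  have h0C : (0 : Fin n → ℝ) ∈ closure (interior σ) := by
    have h1 : Filter.Tendsto (fun k : ℕ => (1 / ((k:ℝ) + 1)) • x₀) Filter.atTop (nhds 0) := by
      have := (tendsto_one_div_add_atTop_nhds_zero_nat (𝕜 := ℝ)).smul_const x₀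
      simpa using this
    exact mem_closure_of_tendsto h1 (Filter.Eventually.of_forall fun k =>
      hCscale _ (by positivity) _ hx₀)
  have h0C' : (0 : Fin n → ℝ) ∈ closure (interior σ') := by
    have h1 : Filter.Tendsto (fun k : ℕ => (1 / ((k:ℝ) + 1)) • (γ x₀)) Filter.atTop (nhds 0) := by
      have := (tendsto_one_div_add_atTop_nhds_zero_nat (𝕜 := ℝ)).smul_const (γ x₀)
      simpa using this
    exact mem_closure_of_tendsto h1 (Filter.Eventually.of_forall fun k =>
      hC'scale _ (by positivity) _ hy₀C')
  have h0W : (0 : Fin n → ℝ) ∈ W := hW ▸ ⟨h0C, h0C'⟩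
  have hWC : W ⊆ closure (interior σ) := hW ▸ inter_subset_left
  have hWC' : W ⊆ closure (interior σ') := hW ▸ inter_subset_right
  have hWσ : W ⊆ closure σ := hWC.trans (closure_mono interior_subset)
  have hWσ' : W ⊆ closure σ' := hWC'.trans (closure_mono interior_subset)
  obtain ⟨-, hWconv, hWsmul, hWface⟩ := hWfaceC
  have hWadd : ∀ x ∈ W, ∀ y ∈ W, x + y ∈ W := by
    intro x hx y hy
    have hz : (2:ℝ)⁻¹ • x + (2:ℝ)⁻¹ • y ∈ W :=
      hWconv hx hy (by norm_num) (by norm_num) (by norm_num)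
    have h2 := hWsmul 2 (by norm_num) _ hz
    rwa [smul_add, smul_smul, smul_smul, (by norm_num : (2:ℝ) * 2⁻¹ = 1), one_smul,
      one_smul] at h2
  -- the span of W and a functional cutting it out
  set p : Submodule ℝ (Fin n → ℝ) := Submodule.span ℝ W with hp
  have hγp : ∀ x ∈ p, γ x = x := by
    intro x hx
    rw [hp] at hx
    induction hx using Submodule.span_induction with
    | mem x hx => exact hγW x hx
    | zero => exact map_zero γ
    | add x y _ _ ihx ihy => rw [map_add, ihx, ihy]
    | smul a x _ ihx => rw [map_smul, ihx]
  have hplt : p < ⊤ := by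
    rcases lt_or_eq_of_le (le_top (a := p)) with h | h
    · exact h
    · exfalso
      have h2 := hWcodim
      rw [h, finrank_top, hVrank] at h2
      omega
  obtain ⟨f, hfne, hfbot⟩ := Submodule.exists_dual_map_eq_bot_of_lt_top hplt inferInstance
  have hfp0 : ∀ x ∈ p, f x = 0 := by
    intro x hx
    have h1 : f x ∈ p.map f := Submodule.mem_map_of_mem hx
    rwa [hfbot, Submodule.mem_bot] at h1
  have hrange : LinearMap.range f = ⊤ := by
    obtain ⟨v, hv⟩ : ∃ v, f v ≠ 0 := by
      by_contra h
      push_neg at h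
      exact hfne (LinearMap.ext fun v => by simp [h v])
    rw [LinearMap.range_eq_top]
    intro y
    refine ⟨(y / f v) • v, ?_⟩
    rw [map_smul, smul_eq_mul, div_mul_cancel₀ _ hv]
  have hker : LinearMap.ker f = p := by
    have h1 := LinearMap.finrank_range_add_finrank_ker f
    rw [hrange, finrank_top, Module.finrank_self, hVrank] at h1
    have h2 := hWcodim
    exact (Submodule.eq_of_le_of_finrank_eq
      (fun x hx => LinearMap.mem_ker.2 (hfp0 x hx)) (by omega)).symm
  -- a "center" point w of W absorbing small perturbations along span W
  obtain ⟨s, hsW, hsspan, hsli⟩ := exists_linearIndependent ℝ W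
  have hsfin : s.Finite := hsli.setFinite
  set t : Finset (Fin n → ℝ) := hsfin.toFinset with ht
  have htW : ∀ i ∈ t, i ∈ W := by
    intro i hi
    rw [ht, Set.Finite.mem_toFinset] at hi
    exact hsW hi
  have hcomb : ∀ c : (Fin n → ℝ) → ℝ, (∀ i ∈ t, 0 ≤ c i) → (∑ i ∈ t, c i • i) ∈ W := by
    intro c hc
    refine Finset.sum_induction _ (· ∈ W) (fun a b ha hb => hWadd a ha b hb) h0W ?_
    intro i hi
    exact hWsmul (c i) (hc i hi) i (htW i hi)
  set w : Fin n → ℝ := ∑ i ∈ t, i with hwdef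
  have hwW : w ∈ W := by
    have h1 := hcomb (fun _ => 1) (fun i _ => zero_le_one)
    simpa [hwdef] using h1
  have habs : ∀ x ∈ p, ∃ ε : ℝ, 0 < ε ∧ w + ε • x ∈ W := by
    intro x hx
    have hx' : x ∈ Submodule.span ℝ (↑t : Set (Fin n → ℝ)) := by
      rw [ht, Set.Finite.coe_toFinset, hsspan, ← hp]
      exact hx
    obtain ⟨c, -, hc⟩ := Submodule.mem_span_finset.1 hx'
    set S := ∑ i ∈ t, |c i| with hS
    have hS0 : 0 ≤ S := Finset.sum_nonneg fun i _ => abs_nonneg _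
    refine ⟨(1 + S)⁻¹, by positivity, ?_⟩
    have hrw : w + (1 + S)⁻¹ • x = ∑ i ∈ t, (1 + (1 + S)⁻¹ * c i) • i := by
      rw [hwdef, ← hc, Finset.smul_sum, ← Finset.sum_add_distrib]
      refine Finset.sum_congr rfl fun i _ => ?_
      rw [add_smul, one_smul, smul_smul]
    rw [hrw]
    refine hcomb _ fun i hi => ?_
    have hinv : (0:ℝ) ≤ (1 + S)⁻¹ := by positivity
    have h1 : |c i| ≤ S := Finset.single_le_sum (fun j _ => abs_nonneg (c j)) hi
    have h2 : (1 + S)⁻¹ * |c i| ≤ 1 := by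
      have h3 := mul_le_mul_of_nonneg_left (le_trans h1 (by linarith : S ≤ 1 + S)) hinv
      rwa [inv_mul_cancel₀ (by positivity : (1:ℝ) + S ≠ 0)] at h3
    have h3 : (1 + S)⁻¹ * (-|c i|) ≤ (1 + S)⁻¹ * c i :=
      mul_le_mul_of_nonneg_left (neg_abs_le _) hinv
    rw [mul_neg] at h3
    linarith
  -- the interiors are disjoint
  have hdisj : ¬ (interior σ ∩ interior σ').Nonempty := by
    rintro ⟨z, hz⟩
    have hsub : interior σ ∩ interior σ' ⊆ (p : Set (Fin n → ℝ)) := by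
      intro y hy
      have hyW : y ∈ W := hW ▸ ⟨subset_closure hy.1, subset_closure hy.2⟩
      rw [hp]
      exact Submodule.subset_span hyW
    have hint : (interior (p : Set (Fin n → ℝ))).Nonempty :=
      ⟨z, interior_maximal hsub (isOpen_interior.inter isOpen_interior) hz⟩
    have htop := p.eq_top_of_nonempty_interior' hint
    have h2 := hWcodim
    rw [htop, finrank_top, hVrank] at h2
    omega
  -- f does not vanish on the interior of σ
  have hCp : ∀ x ∈ interior σ, f x ≠ 0 := by
    intro x hx hfx
    have hxp : x ∈ p := by rw [← hker]; exact LinearMap.mem_ker.2 hfx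
    obtain ⟨ε, hε, hmem⟩ := habs (-x) (neg_mem hxp)
    have hεx : ε • x ∈ interior σ := hCscale ε hε x hx
    have hsum : (w + ε • (-x)) + ε • x = w := by rw [smul_neg]; abel
    have hface := hWface _ (hWC hmem) _ (subset_closure hεx) (by rw [hsum]; exact hwW)
    have hclo : ε • x ∈ closure (interior σ') := hWC' hface.2
    rw [mem_closure_iff] at hclo
    obtain ⟨y, hy1, hy2⟩ := hclo (interior σ) isOpen_interior hεx
    exact hdisj ⟨y, hy1, hy2⟩
  have hfx₀ : f x₀ ≠ 0 := hCp x₀ hx₀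
  have hfy₀ : f (γ x₀) ≠ 0 := by
    intro h
    have hyp : γ x₀ ∈ p := by rw [← hker]; exact LinearMap.mem_ker.2 h
    have h1 : γ (γ x₀) = γ x₀ := hγp _ hyp
    have h2 : x₀ = γ x₀ := by
      have h3 := congrArg γ.symm h1
      rw [LinearEquiv.symm_apply_apply, LinearEquiv.symm_apply_apply] at h3
      exact h3.symm
    exact hfx₀ (h2 ▸ h)
  -- σ and σ' lie on opposite sides of the hyperplane ker f
  have hopp : f x₀ * f (γ x₀) < 0 := by
    rcases lt_trichotomy (f x₀ * f (γ x₀)) 0 with h | h | h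
    · exact h
    · exact absurd h (mul_ne_zero hfx₀ hfy₀)
    · exfalso
      have hs : 0 < f (γ x₀) / f x₀ := by
        rcases mul_pos_iff.1 h with ⟨h1, h2⟩ | ⟨h1, h2⟩
        · exact div_pos_iff.2 (Or.inl ⟨h2, h1⟩)
        · exact div_pos_iff.2 (Or.inr ⟨h2, h1⟩)
      have hhp : γ x₀ - (f (γ x₀) / f x₀) • x₀ ∈ p := by
        rw [← hker]
        refine LinearMap.mem_ker.2 ?_
        rw [map_sub, map_smul, smul_eq_mul, div_mul_cancel₀ _ hfx₀, sub_self]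
      obtain ⟨ε, hε, hmem⟩ := habs _ hhp
      have hz1 : w + ε • (γ x₀) ∈ interior σ := by
        have h1 : w + ε • (γ x₀ - (f (γ x₀) / f x₀) • x₀) ∈ closure σ := hWσ hmem
        have h2 : (ε * (f (γ x₀) / f x₀)) • x₀ ∈ interior σ :=
          hCscale _ (mul_pos hε hs) _ hx₀
        have h3 := hKC _ h1 _ h2
        have h4 : (w + ε • (γ x₀ - (f (γ x₀) / f x₀) • x₀)) + (ε * (f (γ x₀) / f x₀)) • x₀ =
            w + ε • (γ x₀) := by
          rw [smul_sub, mul_smul]; abel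
        rwa [h4] at h3
      have hz2 : w + ε • (γ x₀) ∈ interior σ' := by
        have h1 : w ∈ closure σ' := hWσ' hwW
        have h2 : ε • (γ x₀) ∈ interior σ' := hC'scale _ hε _ hy₀C'
        exact hKC' _ h1 _ h2
      exact hdisj ⟨_, hz1, hz2⟩
  -- the structure of γ
  have hform : ∀ x, γ x = x + (f x / f x₀) • (γ x₀ - x₀) := by
    intro x
    have hmem : x - (f x / f x₀) • x₀ ∈ p := by
      rw [← hker]
      refine LinearMap.mem_ker.2 ?_
      rw [map_sub, map_smul, smul_eq_mul, div_mul_cancel₀ _ hfx₀, sub_self]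
    have h1 : γ x = γ (x - (f x / f x₀) • x₀) + (f x / f x₀) • γ x₀ := by
      rw [map_sub, map_smul]; abel
    rw [h1, hγp _ hmem, smul_sub]
    abel
  -- the determinant of γ
  have hA : LinearMap.toMatrix' (γ : (Fin n → ℝ) →ₗ[ℝ] (Fin n → ℝ)) =
      1 + Matrix.replicateCol (Fin 1) ((f x₀)⁻¹ • (γ x₀ - x₀)) *
        Matrix.replicateRow (Fin 1) (fun j => f (Pi.single j 1)) := by
    ext i j
    rw [LinearMap.toMatrix'_apply]
    have hsingle : (fun j' => if j' = j then (1:ℝ) else 0) = Pi.single j 1 := by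
      funext k; rw [Pi.single_apply]
    rw [LinearEquiv.coe_coe]
    have h2 := congrFun (hform (Pi.single j 1)) i
    rw [h2]
    simp only [Matrix.add_apply, Matrix.mul_apply, Matrix.replicateCol_apply, Matrix.replicateRow_apply,
      Matrix.one_apply, Finset.univ_unique, Finset.sum_singleton, Pi.add_apply, Pi.smul_apply,
      Pi.sub_apply, smul_eq_mul, Pi.single_apply]
    ring
  have hdetformula : LinearMap.det (γ : (Fin n → ℝ) →ₗ[ℝ] (Fin n → ℝ)) =
      1 + (f x₀)⁻¹ * f (γ x₀ - x₀) := by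
    erw [← LinearMap.det_toMatrix', hA, Matrix.det_one_add_replicateCol_mul_replicateRow]
    have hfd : f (γ x₀ - x₀) =
        ∑ i, (γ x₀ - x₀) i • f (fun j' => if i = j' then (1:ℝ) else 0) :=
      f.pi_apply_eq_sum_univ _
    simp only [dotProduct, Pi.smul_apply, smul_eq_mul]
    rw [hfd, Finset.mul_sum]
    congr 1
    refine Finset.sum_congr rfl fun i _ => ?_
    have hsingle : (fun j' => if i = j' then (1:ℝ) else 0) = Pi.single i 1 := by
      funext k; simp [Pi.single_apply, eq_comm]
    rw [hsingle, smul_eq_mul]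
    ring
  have hdet_pm : LinearMap.det (γ : (Fin n → ℝ) →ₗ[ℝ] (Fin n → ℝ)) = 1 ∨
      LinearMap.det (γ : (Fin n → ℝ) →ₗ[ℝ] (Fin n → ℝ)) = -1 := by
    have hcast : ∀ j : Fin n,
        (fun i => (((Pi.single j 1 : Fin n → ℤ) i : ℤ) : ℝ)) = (Pi.single j 1 : Fin n → ℝ) := by
      intro j; funext i
      simp [Pi.single_apply, apply_ite (fun z : ℤ => (z : ℝ))]
    obtain ⟨hint1, hint2⟩ := hγint
    choose NA hNA using fun j => hint1 (Pi.single j 1)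
    choose NB hNB using fun j => hint2 (Pi.single j 1)
    set Z₁ : Matrix (Fin n) (Fin n) ℤ := Matrix.of (fun i j => NA j i) with hZ₁
    set Z₂ : Matrix (Fin n) (Fin n) ℤ := Matrix.of (fun i j => NB j i) with hZ₂
    have hAmap : LinearMap.toMatrix' (γ : (Fin n → ℝ) →ₗ[ℝ] (Fin n → ℝ)) =
        Z₁.map (⇑(Int.castRingHom ℝ)) := by
      ext i j
      rw [LinearMap.toMatrix'_apply]
      have e1 : (fun j' => if j' = j then (1:ℝ) else 0) = (Pi.single j 1 : Fin n → ℝ) := by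
        funext k; rw [Pi.single_apply]
      rw [LinearEquiv.coe_coe, ← hcast j, hNA j]
      simp [hZ₁, Matrix.map_apply]
    have hBmap : LinearMap.toMatrix' (γ.symm : (Fin n → ℝ) →ₗ[ℝ] (Fin n → ℝ)) =
        Z₂.map (⇑(Int.castRingHom ℝ)) := by
      ext i j
      rw [LinearMap.toMatrix'_apply]
      have e1 : (fun j' => if j' = j then (1:ℝ) else 0) = (Pi.single j 1 : Fin n → ℝ) := by
        funext k; rw [Pi.single_apply]
      rw [LinearEquiv.coe_coe, ← hcast j, hNB j]
      simp [hZ₂, Matrix.map_apply]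
    have hAB : Z₁.map (⇑(Int.castRingHom ℝ)) * Z₂.map (⇑(Int.castRingHom ℝ)) = 1 := by
      rw [← hAmap, ← hBmap, ← LinearMap.toMatrix'_comp]
      have hcomp : ((γ : (Fin n → ℝ) →ₗ[ℝ] (Fin n → ℝ)).comp
          (γ.symm : (Fin n → ℝ) →ₗ[ℝ] (Fin n → ℝ))) = LinearMap.id := by
        apply LinearMap.ext; intro x; simp
      rw [hcomp, LinearMap.toMatrix'_id]
    rw [← Matrix.map_mul] at hAB
    have hZZ : Z₁ * Z₂ = 1 := by
      ext i j
      have h := Matrix.ext_iff.2 hAB i j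
      rw [Matrix.map_apply, Matrix.one_apply, eq_intCast] at h
      rw [Matrix.one_apply]
      split_ifs at h ⊢ with hij
      · exact_mod_cast h
      · exact_mod_cast h
    have hdZ : Z₁.det * Z₂.det = 1 := by rw [← Matrix.det_mul, hZZ, Matrix.det_one]
    have hdet1 : LinearMap.det (γ : (Fin n → ℝ) →ₗ[ℝ] (Fin n → ℝ)) = ((Z₁.det : ℤ) : ℝ) := by
      rw [← LinearMap.det_toMatrix', hAmap, ← RingHom.mapMatrix_apply, ← RingHom.map_det]
      simp
    rcases Int.mul_eq_one_iff_eq_one_or_neg_one.1 hdZ with ⟨h, -⟩ | ⟨h, -⟩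
    · left; rw [hdet1, h]; norm_num
    · right; rw [hdet1, h]; norm_num
  -- the eigenvalue is -1
  have hfd : f (γ x₀ - x₀) = -2 * f x₀ := by
    have hlt : LinearMap.det (γ : (Fin n → ℝ) →ₗ[ℝ] (Fin n → ℝ)) < 0 := by
      rw [hdetformula]
      have hq : f (γ x₀) / f x₀ < 0 := by
        rcases mul_neg_iff.1 hopp with ⟨h1, h2⟩ | ⟨h1, h2⟩
        · exact div_neg_of_neg_of_pos h2 h1
        · exact div_neg_of_pos_of_neg h2 h1
      have he : 1 + (f x₀)⁻¹ * f (γ x₀ - x₀) = f (γ x₀) / f x₀ := by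
        rw [map_sub]
        field_simp
        ring
      rw [he]
      exact hq
    have hL : 1 + (f x₀)⁻¹ * f (γ x₀ - x₀) = -1 := by
      rcases hdet_pm with h | h
      · exfalso; rw [h] at hlt; linarith
      · rw [← hdetformula]; exact h
    have h2 : (f x₀)⁻¹ * f (γ x₀ - x₀) = -2 := by linarith
    have h3 := congrArg (fun r => f x₀ * r) h2
    rw [← mul_assoc, mul_inv_cancel₀ hfx₀, one_mul] at h3
    linarith
  have hfγ : ∀ x, f (γ x) = - f x := by
    intro x
    rw [hform x, map_add, map_smul, smul_eq_mul, hfd]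
    field_simp
    ring
  have hd0 : γ x₀ - x₀ ≠ 0 := by
    intro h
    rw [h, map_zero] at hfd
    apply hfx₀
    linarith
  constructor
  · intro x
    have h1 : γ (γ x) = γ x + (f (γ x) / f x₀) • (γ x₀ - x₀) := hform (γ x)
    rw [h1, hfγ x, hform x, neg_div, neg_smul]
    abel
  · ext x
    simp only [Set.mem_setOf_eq, SetLike.mem_coe]
    constructor
    · intro hx
      have h1 : x + (f x / f x₀) • (γ x₀ - x₀) = x := by rw [← hform x]; exact hx
      have h2 : (f x / f x₀) • (γ x₀ - x₀) = 0 := by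
        have := add_eq_left.1 h1
        exact this
      rcases smul_eq_zero.1 h2 with h | h
      · have hfx : f x = 0 := by
          rcases div_eq_zero_iff.1 h with h' | h'
          · exact h'
          · exact absurd h' hfx₀
        have : x ∈ p := by rw [← hker]; exact LinearMap.mem_ker.2 hfx
        rwa [hp] at this
      · exact absurd h hd0
    · intro hx
      have hxp : x ∈ p := by rw [hp]; exact hx
      rw [hform x, hfp0 x hxp, zero_div, zero_smul, add_zero]
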